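/- Let G be a digraph with a global sink, and let σ₁ and σ₂ be recurrent chip configurations on G. If there is an acyclic rotor configuration ρ on G such that σ₁(ρ) = σ₂(ρ), then σ₁ = σ₂. -/

import Mathlib

/-!
Freeness of the sandpile action on acyclic rotor configurations (Holroyd et al.,
Lemma 3.18): if σ₁ and σ₂ are recurrent chip configurations and σ₁(ρ) = σ₂(ρ) for
some acyclic rotor configuration ρ, then σ₁ = σ₂.
-/

/-- The out-degree of a vertex. -/
def outdeg {V E : Type} [Fintype E] [DecidableEq V] (tail : E → V) (v : V) : ℕ :=
  (Finset.univ.filter (fun e => tail e = v)).card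

/-- The number of edges from `v` to `w`. -/
def numEdges {V E : Type} [Fintype E] [DecidableEq V] (tail head : E → V) (v w : V) : ℕ :=
  (Finset.univ.filter (fun e => tail e = v ∧ head e = w)).card

/-- The vertices other than the (global) sink `s`. -/
abbrev Vne {V : Type} (s : V) : Type := {v : V // v ≠ s}

/-- Firing the vertex `v`. -/
def fire {V E : Type} [Fintype E] [DecidableEq V] {s : V} (tail head : E → V)
    (σ : Vne s → ℕ) (v : Vne s) : Vne s → ℕ :=
  fun w =>
    if w = v then σ v + numEdges tail head v.1 v.1 - outdeg tail v.1
    else σ w + numEdges tail head v.1 w.1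

/-- A (non-sink) vertex is active when it has at least as many chips as outgoing edges. -/
def Active {V E : Type} [Fintype E] [DecidableEq V] {s : V} (tail : E → V)
    (σ : Vne s → ℕ) (v : Vne s) : Prop :=
  outdeg tail v.1 ≤ σ v

/-- The result of firing the vertices in the list `l` in order, starting from `σ`. -/
def fireList {V E : Type} [Fintype E] [DecidableEq V] {s : V} (tail head : E → V)
    (σ : Vne s → ℕ) : List (Vne s) → (Vne s → ℕ)
  | [] => σ
  | v :: l => fireList tail head (fire tail head σ v) l

/-- The firing sequence `l` is legal from `σ`. -/
def Legal {V E : Type} [Fintype E] [DecidableEq V] {s : V} (tail head : E → V)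
    (σ : Vne s → ℕ) : List (Vne s) → Prop
  | [] => True
  | v :: l => Active tail σ v ∧ Legal tail head (fire tail head σ v) l

/-- A configuration is stable when no non-sink vertex is active. -/
def Stable {V E : Type} [Fintype E] [DecidableEq V] {s : V} (tail : E → V)
    (σ : Vne s → ℕ) : Prop :=
  ∀ v, σ v < outdeg tail v.1

/-- `σ` is accessible: from any chip configuration `ζ` one can obtain `σ` by adding
some chips and then performing a legal sequence of firings of active vertices. -/
def Accessible {V E : Type} [Fintype E] [DecidableEq V] {s : V} (tail head : E → V)
    (σ : Vne s → ℕ) : Prop :=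
  ∀ ζ : Vne s → ℕ, ∃ (β : Vne s → ℕ) (l : List (Vne s)),
    Legal tail head (fun v => ζ v + β v) l ∧ fireList tail head (fun v => ζ v + β v) l = σ

/-- A chip configuration is recurrent when it is both stable and accessible. -/
def Recurrent {V E : Type} [Fintype E] [DecidableEq V] {s : V} (tail head : E → V)
    (σ : Vne s → ℕ) : Prop :=
  Stable tail σ ∧ Accessible tail head σ

/-- Rotor configurations on the non-sink vertices. -/
abbrev RotorConfig {V E : Type} (tail : E → V) (s : V) : Type :=
  {ρ : Vne s → E // ∀ v, tail (ρ v) = v.1}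

/-- A chip-and-rotor state. -/
abbrev CRState {V E : Type} (tail : E → V) (s : V) : Type :=
  (Vne s → ℕ) × RotorConfig tail s

/-- Firing the non-sink vertex `v` in a chip-and-rotor state: the rotor at `v` advances
to the next edge and one chip moves from `v` along it (disappearing at the sink). -/
def crFire {V E : Type} [DecidableEq V] {s : V} (tail head : E → V) (next : E → E)
    (hnext : ∀ e, tail (next e) = tail e)
    (τ : CRState tail s) (v : Vne s) : CRState tail s :=
  (fun u => (τ.1 u - if u = v then 1 else 0) +
      if u.1 = head (next (τ.2.1 v)) then 1 else 0,
   ⟨Function.update τ.2.1 v (next (τ.2.1 v)), by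
      intro u
      rcases eq_or_ne u v with h | h
      · rw [h, Function.update_self, hnext]
        exact τ.2.2 v
      · rw [Function.update_of_ne h]
        exact τ.2.2 u⟩)

/-- A non-sink vertex is active when it holds a chip. -/
def crActive {V E : Type} {s : V} (tail : E → V) (τ : CRState tail s) (v : Vne s) : Prop :=
  1 ≤ τ.1 v

/-- The result of firing the vertices in the list `l` in order. -/
def crFireList {V E : Type} [DecidableEq V] {s : V} (tail head : E → V) (next : E → E)
    (hnext : ∀ e, tail (next e) = tail e)
    (τ : CRState tail s) : List (Vne s) → CRState tail s
  | [] => τ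
  | v :: l => crFireList tail head next hnext (crFire tail head next hnext τ v) l

/-- The firing sequence `l` is legal from `τ`. -/
def crLegal {V E : Type} [DecidableEq V] {s : V} (tail head : E → V) (next : E → E)
    (hnext : ∀ e, tail (next e) = tail e)
    (τ : CRState tail s) : List (Vne s) → Prop
  | [] => True
  | v :: l => crActive tail τ v ∧ crLegal tail head next hnext (crFire tail head next hnext τ v) l

/-- `σ(ρ) = ρ'`: starting with chips `σ` and rotors `ρ`, all chips can be routed to
the sink by a legal firing sequence, leaving the rotor configuration `ρ'`. -/
def RoutesAll {V E : Type} [DecidableEq V] {s : V} (tail head : E → V) (next : E → E)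
    (hnext : ∀ e, tail (next e) = tail e)
    (σ : Vne s → ℕ) (ρ ρ' : RotorConfig tail s) : Prop :=
  ∃ l : List (Vne s), crLegal tail head next hnext (σ, ρ) l ∧
    (∀ v, (crFireList tail head next hnext (σ, ρ) l).1 v = 0) ∧
    (crFireList tail head next hnext (σ, ρ) l).2 = ρ'

/-- The vertex-successor map of a rotor configuration (fixing the sink). -/
def rotorSucc {V E : Type} [DecidableEq V] (tail head : E → V) (s : V)
    (ρ : RotorConfig tail s) : V → V :=
  fun u => if h : u = s then u else head (ρ.1 ⟨u, h⟩)

/-- A rotor configuration is acyclic when its edges contain no directed cycle. -/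
def RAcyclic {V E : Type} [DecidableEq V] (tail head : E → V) (s : V)
    (ρ : RotorConfig tail s) : Prop :=
  ∀ (v : Vne s) (k : ℕ), 0 < k → (rotorSucc tail head s ρ)^[k] v.1 ≠ v.1
set_option linter.unusedSectionVars false
set_option maxHeartbeats 1000000

lemma count_cons' {α : Type} [BEq α] [LawfulBEq α] [DecidableEq α] (l : List α) (a b : α) :
    (b::l).count a = l.count a + if a = b then 1 else 0 := by
  rw [List.count_cons]
  congr 1
  simp only [beq_iff_eq]
  by_cases h : a = b
  · simp [h]
  · simp [h, Ne.symm h]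

section ChipLemmas

variable {V E : Type} [Fintype V] [DecidableEq V] [Fintype E] {s : V}
variable (tail head : E → V)

lemma fire_add (σ δ : Vne s → ℕ) (v : Vne s) (hv : Active tail σ v) :
    fire tail head (fun w => σ w + δ w) v = fun w => fire tail head σ v w + δ w := by
  have hv' : outdeg tail v.1 ≤ σ v := hv
  funext w
  simp only [fire]
  rcases eq_or_ne w v with h | h
  · subst h
    rw [if_pos rfl, if_pos rfl]
    omega
  · rw [if_neg h, if_neg h]
    omega

lemma legal_fireList_add : ∀ (l : List (Vne s)) (σ δ : Vne s → ℕ), Legal tail head σ l →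
    Legal tail head (fun w => σ w + δ w) l ∧
    fireList tail head (fun w => σ w + δ w) l = fun w => fireList tail head σ l w + δ w := by
  intro l
  induction l with
  | nil => exact fun σ δ _ => ⟨trivial, rfl⟩
  | cons v l ih =>
    intro σ δ h
    obtain ⟨ha, hl⟩ := h
    have hf := fire_add tail head σ δ v ha
    have ihh := ih (fire tail head σ v) δ hl
    constructor
    · refine ⟨le_trans ha (Nat.le_add_right _ _), ?_⟩
      rw [hf]; exact ihh.1
    · show fireList tail head (fire tail head (fun w => σ w + δ w) v) l = _
      rw [hf]; exact ihh.2

lemma fireList_append : ∀ (l₁ l₂ : List (Vne s)) (σ : Vne s → ℕ),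
    fireList tail head σ (l₁ ++ l₂) = fireList tail head (fireList tail head σ l₁) l₂ := by
  intro l₁
  induction l₁ with
  | nil => intro l₂ σ; rfl
  | cons v l ih => intro l₂ σ; exact ih l₂ _

lemma legal_append {l₁ l₂ : List (Vne s)} {σ : Vne s → ℕ}
    (h₁ : Legal tail head σ l₁) (h₂ : Legal tail head (fireList tail head σ l₁) l₂) :
    Legal tail head σ (l₁ ++ l₂) := by
  induction l₁ generalizing σ with
  | nil => exact h₂
  | cons v l ih => exact ⟨h₁.1, ih h₁.2 h₂⟩

lemma fireList_count : ∀ (l : List (Vne s)) (σ : Vne s → ℕ), Legal tail head σ l → ∀ v,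
    (fireList tail head σ l v : ℤ) + (l.count v : ℤ) * (outdeg tail v.1 : ℤ)
      = (σ v : ℤ) + ∑ w : Vne s, (l.count w : ℤ) * (numEdges tail head w.1 v.1 : ℤ) := by
  intro l
  induction l with
  | nil => intro σ _ v; simp [fireList]
  | cons u l ih =>
    intro σ h v
    obtain ⟨ha, hl⟩ := h
    have hIH := ih (fire tail head σ u) hl v
    have hcount : ∀ w : Vne s, ((u :: l).count w : ℤ) = (l.count w : ℤ) + if w = u then 1 else 0 := by
      intro w
      rw [count_cons' l w u]
      push_cast
      rfl
    have hsum : ∑ w : Vne s, ((u :: l).count w : ℤ) * (numEdges tail head w.1 v.1 : ℤ)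
        = (∑ w : Vne s, (l.count w : ℤ) * (numEdges tail head w.1 v.1 : ℤ))
          + (numEdges tail head u.1 v.1 : ℤ) := by
      have hterm : ∀ w : Vne s, ((u :: l).count w : ℤ) * (numEdges tail head w.1 v.1 : ℤ)
          = (l.count w : ℤ) * (numEdges tail head w.1 v.1 : ℤ)
            + (if w = u then (numEdges tail head w.1 v.1 : ℤ) else 0) := by
        intro w; rw [hcount w]; split <;> ring
      rw [Finset.sum_congr rfl fun w _ => hterm w, Finset.sum_add_distrib,
        Finset.sum_ite_eq' Finset.univ u]
      simp
    have hfire : (fire tail head σ u v : ℤ)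
        = (σ v : ℤ) + (numEdges tail head u.1 v.1 : ℤ)
          - (if v = u then (outdeg tail v.1 : ℤ) else 0) := by
      simp only [fire]
      split
      · rename_i hvu
        subst hvu
        rw [Nat.cast_sub (le_trans ha (Nat.le_add_right _ _))]
        simp
      · simp
    show (fireList tail head (fire tail head σ u) l v : ℤ) + _ = _
    rw [hsum, hcount v]
    by_cases hvu : v = u
    · rw [if_pos hvu] at hfire ⊢
      linarith
    · rw [if_neg hvu] at hfire ⊢
      linarith

lemma least_action (T : Vne s → ℕ) (hT : Stable tail T) :
    ∀ (l : List (Vne s)) (σ f : Vne s → ℕ), Legal tail head σ l →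
    (∀ v, (σ v : ℤ) + ∑ w : Vne s, (f w : ℤ) * (numEdges tail head w.1 v.1 : ℤ)
        = (T v : ℤ) + (f v : ℤ) * (outdeg tail v.1 : ℤ)) →
    ∀ v, l.count v ≤ f v := by
  intro l
  induction l with
  | nil => intro σ f _ _ v; simp
  | cons u l ih =>
    intro σ f h heq
    obtain ⟨ha, hl⟩ := h
    have hau : (outdeg tail u.1 : ℤ) ≤ (σ u : ℤ) := by exact_mod_cast ha
    have hTu : (T u : ℤ) < (outdeg tail u.1 : ℤ) := by exact_mod_cast hT u
    have hfu : 1 ≤ f u := by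
      by_contra hc
      have hfu0 : f u = 0 := by omega
      have := heq u
      rw [hfu0] at this
      have hsum0 : (0 : ℤ) ≤ ∑ w : Vne s, (f w : ℤ) * (numEdges tail head w.1 u.1 : ℤ) :=
        Finset.sum_nonneg fun w _ => mul_nonneg (Int.natCast_nonneg _) (Int.natCast_nonneg _)
      simp at this
      linarith
    set f' : Vne s → ℕ := fun w => f w - (if w = u then 1 else 0) with hf'
    have hf'cast : ∀ w : Vne s, (f' w : ℤ) = (f w : ℤ) - (if w = u then 1 else 0) := by
      intro w
      simp only [hf']
      split
      · rename_i hwu; subst hwu; rw [Nat.cast_sub hfu]; simp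
      · simp
    have heq' : ∀ v, ((fire tail head σ u v : ℤ))
        + ∑ w : Vne s, (f' w : ℤ) * (numEdges tail head w.1 v.1 : ℤ)
        = (T v : ℤ) + (f' v : ℤ) * (outdeg tail v.1 : ℤ) := by
      intro v
      have hsum : ∑ w : Vne s, (f' w : ℤ) * (numEdges tail head w.1 v.1 : ℤ)
          = (∑ w : Vne s, (f w : ℤ) * (numEdges tail head w.1 v.1 : ℤ))
            - (numEdges tail head u.1 v.1 : ℤ) := by
        have hterm : ∀ w : Vne s, (f' w : ℤ) * (numEdges tail head w.1 v.1 : ℤ)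
            = (f w : ℤ) * (numEdges tail head w.1 v.1 : ℤ)
              - (if w = u then (numEdges tail head w.1 v.1 : ℤ) else 0) := by
          intro w; rw [hf'cast w]; split <;> ring
        rw [Finset.sum_congr rfl fun w _ => hterm w, Finset.sum_sub_distrib,
          Finset.sum_ite_eq' Finset.univ u]
        simp
      have hfire : (fire tail head σ u v : ℤ)
          = (σ v : ℤ) + (numEdges tail head u.1 v.1 : ℤ)
            - (if v = u then (outdeg tail v.1 : ℤ) else 0) := by
        simp only [fire]
        split
        · rename_i hvu
          subst hvu
          rw [Nat.cast_sub (le_trans ha (Nat.le_add_right _ _))]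
          simp
        · simp
      rw [hsum, hfire, hf'cast v]
      have hv2 := heq v
      rcases eq_or_ne v u with hvu | hvu
      · subst hvu
        simp only [eq_self_iff_true, if_true]
        linarith
      · simp only [if_neg hvu]
        linarith
    have hle := ih (fire tail head σ u) f' hl heq'
    intro v
    have hlev := hle v
    rw [count_cons' l v u]
    simp only [hf'] at hlev
    rcases eq_or_ne v u with hvu | hvu
    · subst hvu
      have h1 : (if v = v then 1 else 0) = 1 := if_pos rfl
      rw [h1] at hlev ⊢
      omega
    · rw [if_neg hvu] at hlev ⊢
      omega

lemma le_fireList_of_not_mem : ∀ (l : List (Vne s)) (σ : Vne s → ℕ) (v : Vne s), v ∉ l →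
    σ v ≤ fireList tail head σ l v := by
  intro l
  induction l with
  | nil => intro σ v _; exact le_refl _
  | cons u l ih =>
    intro σ v hv
    have hvu : v ≠ u := fun h => hv (h ▸ List.mem_cons_self (a := u) (l := l))
    have hvl : v ∉ l := fun h => hv (List.mem_cons_of_mem u h)
    refine le_trans ?_ (ih (fire tail head σ u) v hvl)
    simp only [fire, if_neg hvu]
    omega

lemma count_pos_of_stable (σ : Vne s → ℕ) (l : List (Vne s))
    (hst : Stable tail (fireList tail head σ l)) (v : Vne s)
    (hv : outdeg tail v.1 ≤ σ v) : 1 ≤ l.count v := by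
  by_contra hc
  have h0 : l.count v = 0 := by omega
  have hnm : v ∉ l := by
    intro hm
    have := List.count_pos_iff.mpr hm
    omega
  have := le_fireList_of_not_mem tail head l σ v hnm
  have := hst v
  omega

lemma loop_iter (A B : Vne s → ℕ) (l : List (Vne s)) (hl : Legal tail head A l)
    (hB : fireList tail head A l = B) :
    ∀ k : ℕ, ∃ L : List (Vne s), Legal tail head (fun v => k * A v) L ∧
      fireList tail head (fun v => k * A v) L = (fun v => k * B v) ∧
      ∀ v, L.count v = k * l.count v := by
  intro k
  induction k with
  | zero =>
    refine ⟨[], trivial, ?_, fun v => by simp⟩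
    funext v; simp [fireList]
  | succ k ih =>
    obtain ⟨L, hLleg, hLfire, hLcount⟩ := ih
    refine ⟨l ++ L, ?_, ?_, ?_⟩
    all_goals {
      have hstep := legal_fireList_add tail head l A (fun v => k * A v) hl
      have hstep2 := legal_fireList_add tail head L (fun v => k * A v) B hLleg
      have he1 : (fun v => (k+1) * A v) = (fun v => A v + k * A v) := by
        funext v; ring
      have he2 : fireList tail head (fun v => A v + k * A v) l
          = fun v => k * A v + B v := by
        rw [hstep.2, hB]; funext v; ring
      first
      | (rw [he1]
         exact legal_append tail head hstep.1 (by rw [he2]; exact hstep2.1))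
      | (rw [he1, fireList_append, he2, hstep2.2, hLfire]
         funext v; ring)
      | (intro v
         rw [List.count_append, hLcount v]
         ring)
    }

end ChipLemmas
section Uniq

variable {V E : Type} [Fintype V] [DecidableEq V] [Fintype E] {s : V}
variable (tail head : E → V)

set_option linter.unusedSectionVars false in
lemma c_nonneg (σ₁ σ₂ : Vne s → ℕ) (hst₂ : Stable tail σ₂)
    (hacc₁ : Accessible tail head σ₁) (hacc₂ : Accessible tail head σ₂)
    (c : Vne s → ℤ)
    (hc : ∀ v : Vne s, (σ₁ v : ℤ) + ∑ w : Vne s, c w * (numEdges tail head w.1 v.1 : ℤ)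
        = (σ₂ v : ℤ) + c v * (outdeg tail v.1 : ℤ)) :
    ∀ v, 0 ≤ c v := by
  classical
  obtain ⟨β₂, l₂, hleg₂, hfin₂⟩ := hacc₂ (fun v => outdeg tail v.1)
  set A : Vne s → ℕ := fun v => outdeg tail v.1 + β₂ v with hA
  have hw₂ : ∀ v : Vne s, 1 ≤ l₂.count v := by
    intro v
    refine count_pos_of_stable tail head A l₂ ?_ v (Nat.le_add_right _ _)
    rw [hfin₂]; exact hst₂
  set k : ℕ := 1 + ∑ v : Vne s, (-(c v)).toNat with hk
  have hkc : ∀ v : Vne s, 1 ≤ (k : ℤ) + c v := by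
    intro v
    have h1 : (-(c v)).toNat ≤ ∑ v : Vne s, (-(c v)).toNat :=
      Finset.single_le_sum (f := fun v : Vne s => (-(c v)).toNat)
        (fun w _ => Nat.zero_le _) (Finset.mem_univ v)
    have h2 : -(c v) ≤ ((-(c v)).toNat : ℤ) := Int.self_le_toNat _
    have h3 : ((-(c v)).toNat : ℤ) ≤ ((∑ v : Vne s, (-(c v)).toNat : ℕ) : ℤ) := by
      exact_mod_cast h1
    have h4 : (k : ℤ) = 1 + ((∑ v : Vne s, (-(c v)).toNat : ℕ) : ℤ) := by
      rw [hk]; push_cast; ring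
    linarith
  obtain ⟨Lk, hLkleg, hLkfire, hLkcount⟩ := loop_iter tail head A σ₂ l₂ hleg₂ hfin₂ k
  obtain ⟨β₁, l₁, hleg₁, hfin₁⟩ := hacc₁ (fun v => k * σ₂ v)
  set χ : Vne s → ℕ := fun v => k * A v + β₁ v with hχ
  have hstep := legal_fireList_add tail head Lk (fun v => k * A v) β₁ hLkleg
  have hLleg : Legal tail head χ (Lk ++ l₁) := by
    refine legal_append tail head hstep.1 ?_
    rw [hstep.2, hLkfire]
    exact hleg₁
  have hLfire : fireList tail head χ (Lk ++ l₁) = σ₁ := by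
    rw [fireList_append, hstep.2, hLkfire]
    exact hfin₁
  set L : List (Vne s) := Lk ++ l₁ with hL
  have hNk : ∀ v : Vne s, (k : ℤ) ≤ (L.count v : ℤ) := by
    intro v
    have : k * l₂.count v + l₁.count v = L.count v := by
      rw [hL, List.count_append, hLkcount v]
    have hk1 : k ≤ k * l₂.count v := Nat.le_mul_of_pos_right k (hw₂ v)
    have : k ≤ L.count v := by omega
    exact_mod_cast this
  have hfnn : ∀ v : Vne s, 0 ≤ (L.count v : ℤ) + c v := by
    intro v
    have := hkc v
    have := hNk v
    linarith
  set f : Vne s → ℕ := fun v => ((L.count v : ℤ) + c v).toNat with hf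
  have hfcast : ∀ v : Vne s, (f v : ℤ) = (L.count v : ℤ) + c v := by
    intro v
    rw [hf]
    exact Int.toNat_of_nonneg (hfnn v)
  have hcount := fireList_count tail head L χ hLleg
  have hlap : ∀ v : Vne s, (χ v : ℤ) + ∑ w : Vne s, (f w : ℤ) * (numEdges tail head w.1 v.1 : ℤ)
      = (σ₂ v : ℤ) + (f v : ℤ) * (outdeg tail v.1 : ℤ) := by
    intro v
    have h1 := hcount v
    rw [hLfire] at h1
    have hsum : ∑ w : Vne s, (f w : ℤ) * (numEdges tail head w.1 v.1 : ℤ)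
        = (∑ w : Vne s, (L.count w : ℤ) * (numEdges tail head w.1 v.1 : ℤ))
          + ∑ w : Vne s, c w * (numEdges tail head w.1 v.1 : ℤ) := by
      rw [← Finset.sum_add_distrib]
      refine Finset.sum_congr rfl fun w _ => ?_
      rw [hfcast w]; ring
    rw [hsum, hfcast v]
    have h2 := hc v
    nlinarith [h1, h2]
  have hle := least_action tail head σ₂ hst₂ L χ f hLleg hlap
  intro v
  have h3 : (L.count v : ℤ) ≤ (f v : ℤ) := by exact_mod_cast hle v
  rw [hfcast v] at h3
  linarith

set_option linter.unusedSectionVars false in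
lemma recurrent_unique (σ₁ σ₂ : Vne s → ℕ)
    (h₁ : Recurrent tail head σ₁) (h₂ : Recurrent tail head σ₂)
    (c : Vne s → ℤ)
    (hc : ∀ v : Vne s, (σ₁ v : ℤ) + ∑ w : Vne s, c w * (numEdges tail head w.1 v.1 : ℤ)
        = (σ₂ v : ℤ) + c v * (outdeg tail v.1 : ℤ)) :
    σ₁ = σ₂ := by
  have hpos := c_nonneg tail head σ₁ σ₂ h₂.1 h₁.2 h₂.2 c hc
  have hneg := c_nonneg tail head σ₂ σ₁ h₁.1 h₂.2 h₁.2 (fun v => -(c v)) (by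
    intro v
    show (σ₂ v : ℤ) + ∑ w : Vne s, -(c w) * (numEdges tail head w.1 v.1 : ℤ)
        = (σ₁ v : ℤ) + -(c v) * (outdeg tail v.1 : ℤ)
    have := hc v
    have hsum : ∑ w : Vne s, -(c w) * (numEdges tail head w.1 v.1 : ℤ)
        = -∑ w : Vne s, c w * (numEdges tail head w.1 v.1 : ℤ) := by
      rw [← Finset.sum_neg_distrib]
      exact Finset.sum_congr rfl fun w _ => by ring
    rw [hsum]
    linarith)
  have hc0 : ∀ v : Vne s, c v = 0 := fun v => le_antisymm (by simpa using hneg v) (hpos v)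
  funext v
  have := hc v
  rw [hc0 v] at this
  have hsum0 : ∑ w : Vne s, c w * (numEdges tail head w.1 v.1 : ℤ) = 0 :=
    Finset.sum_eq_zero fun w _ => by rw [hc0 w]; ring
  rw [hsum0] at this
  simp at this
  exact_mod_cast this

end Uniq
section Rotor

set_option linter.unusedSectionVars false

variable {V E : Type} [Fintype V] [DecidableEq V] [Fintype E] {s : V}
variable (tail head : E → V) (next : E → E)

/-- Number of chips sent to `x` by the first `k` firings of the rotor starting at `e`. -/
def Nfun (e : E) (x : V) (k : ℕ) : ℕ :=
  ∑ j ∈ Finset.range k, if head (next^[j+1] e) = x then 1 else 0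

lemma Nfun_zero (e : E) (x : V) : Nfun head next e x 0 = 0 := by
  simp [Nfun]

lemma Nfun_succ_shift (e : E) (x : V) (k : ℕ) :
    Nfun head next e x (k+1)
      = Nfun head next (next e) x k + (if head (next e) = x then 1 else 0) := by
  unfold Nfun
  rw [Finset.sum_range_succ']
  simp [Function.iterate_succ_apply]
  rfl

lemma crFireList_rotor (hnext : ∀ e, tail (next e) = tail e) :
    ∀ (l : List (Vne s)) (t : CRState tail s) (v : Vne s),
    (crFireList tail head next hnext t l).2.1 v = next^[l.count v] (t.2.1 v) := by
  intro l
  induction l with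
  | nil => intro t v; simp [crFireList]
  | cons u l ih =>
    intro t v
    show (crFireList tail head next hnext (crFire tail head next hnext t u) l).2.1 v = _
    rw [ih (crFire tail head next hnext t u) v, count_cons' l v u]
    rcases eq_or_ne v u with h | h
    · subst h
      rw [if_pos rfl]
      show next^[l.count v] (Function.update t.2.1 v (next (t.2.1 v)) v) = _
      rw [Function.update_self, ← Function.iterate_succ_apply]
    · rw [if_neg h]
      show next^[l.count v] (Function.update t.2.1 u (next (t.2.1 u)) v) = _
      rw [Function.update_of_ne h]
      simp

lemma crFireList_chips (hnext : ∀ e, tail (next e) = tail e) :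
    ∀ (l : List (Vne s)) (t : CRState tail s),
    crLegal tail head next hnext t l →
    ∀ v : Vne s, ((crFireList tail head next hnext t l).1 v : ℤ) + (l.count v : ℤ)
      = (t.1 v : ℤ) + ∑ w : Vne s, (Nfun head next (t.2.1 w) v.1 (l.count w) : ℤ) := by
  intro l
  induction l with
  | nil => intro t _ v; simp [crFireList, Nfun_zero]
  | cons u l ih =>
    intro t h v
    obtain ⟨hact, hl⟩ := h
    have hact' : 1 ≤ t.1 u := hact
    set t' : CRState tail s := crFire tail head next hnext t u with ht'
    have hIH := ih t' hl v
    have ht'chips : (t'.1 v : ℤ)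
        = (t.1 v : ℤ) - (if v = u then 1 else 0)
          + (if v.1 = head (next (t.2.1 u)) then 1 else 0) := by
      show (((t.1 v - if v = u then 1 else 0) + if v.1 = head (next (t.2.1 u)) then 1 else 0 : ℕ) : ℤ) = _
      rcases eq_or_ne v u with hvu | hvu
      · subst hvu
        rw [if_pos rfl, if_pos rfl]
        push_cast [Nat.cast_sub hact']
        split <;> simp
      · rw [if_neg hvu, if_neg hvu]
        push_cast
        split <;> simp
    have ht'rotor : ∀ w : Vne s, t'.2.1 w
        = if w = u then next (t.2.1 u) else t.2.1 w := by
      intro w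
      show Function.update t.2.1 u (next (t.2.1 u)) w = _
      rcases eq_or_ne w u with hwu | hwu
      · subst hwu; rw [Function.update_self, if_pos rfl]
      · rw [Function.update_of_ne hwu, if_neg hwu]
    have hsum : ∑ w : Vne s, (Nfun head next (t.2.1 w) v.1 ((u :: l).count w) : ℤ)
        = (∑ w : Vne s, (Nfun head next (t'.2.1 w) v.1 (l.count w) : ℤ))
          + (if head (next (t.2.1 u)) = v.1 then 1 else 0) := by
      have hdiff : ∀ w : Vne s,
          (Nfun head next (t.2.1 w) v.1 ((u :: l).count w) : ℤ)
            = (Nfun head next (t'.2.1 w) v.1 (l.count w) : ℤ)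
              + (if w = u then (if head (next (t.2.1 u)) = v.1 then (1:ℤ) else 0) else 0) := by
        intro w
        rw [count_cons' l w u, ht'rotor w]
        rcases eq_or_ne w u with hwu | hwu
        · subst hwu
          rw [if_pos rfl, if_pos rfl, if_pos rfl, Nfun_succ_shift]
          push_cast
          split <;> simp
        · rw [if_neg hwu, if_neg hwu, if_neg hwu]
          simp
      rw [Finset.sum_congr rfl fun w _ => hdiff w, Finset.sum_add_distrib,
        Finset.sum_ite_eq' Finset.univ u]
      simp
    have hcnt : ((u :: l).count v : ℤ) = (l.count v : ℤ) + (if v = u then 1 else 0) := by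
      rw [count_cons' l v u]
      push_cast
      rfl
    have hflip : (if v.1 = head (next (t.2.1 u)) then (1:ℤ) else 0)
        = (if head (next (t.2.1 u)) = v.1 then (1:ℤ) else 0) := by
      by_cases hh : v.1 = head (next (t.2.1 u))
      · rw [if_pos hh, if_pos hh.symm]
      · rw [if_neg hh, if_neg (fun hx => hh hx.symm)]
    show ((crFireList tail head next hnext t' l).1 v : ℤ) + _ = _
    rw [hcnt, hsum]
    rw [ht'chips, hflip] at hIH
    linarith

end Rotor
section Period

set_option linter.unusedSectionVars false

variable {V E : Type} [Fintype V] [DecidableEq V] [Fintype E]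
variable (tail head : E → V) (next : E → E)
lemma iter_tail (hnext : ∀ e, tail (next e) = tail e) (x : E) (k : ℕ) : tail (next^[k] x) = tail x := by
  induction k with
  | zero => rfl
  | succ k ih => rw [Function.iterate_succ_apply', hnext, ih]

lemma next_inj (hnext : ∀ e, tail (next e) = tail e)
    (hcyc : ∀ e e' : E, tail e = tail e' → ∃ k, next^[k] e = e') (e : E) (x y : E) (hx : tail x = tail e) (hy : tail y = tail e)
    (h : next x = next y) : x = y := by
  classical
  set F : Finset E := Finset.univ.filter (fun f => tail f = tail e) with hF
  have hmemF : ∀ z : E, tail z = tail e → z ∈ F := by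
    intro z hz; simp [hF, hz]
  have hsurj : ∀ b ∈ F, ∃ a, ∃ ha : a ∈ F, next a = b := by
    intro b hb
    have hbe : tail b = tail e := by simpa [hF] using hb
    obtain ⟨k, hk⟩ := hcyc e b hbe.symm
    cases k with
    | succ k =>
      refine ⟨next^[k] e, hmemF _ (iter_tail tail next hnext e k), ?_⟩
      rw [← hk]
      exact (Function.iterate_succ_apply' next k e).symm
    | zero =>
      -- b = e; find a preimage of e
      obtain ⟨m, hm⟩ := hcyc (next e) e (hnext e)
      cases m with
      | zero => exact ⟨e, hmemF e rfl, by rw [← hk]; exact hm⟩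
      | succ m =>
        refine ⟨next^[m] (next e), hmemF _ (by rw [iter_tail tail next hnext, hnext]), ?_⟩
        rw [← hk]
        exact (Function.iterate_succ_apply' next m (next e)).symm.trans hm
  have hmaps : ∀ a ∈ F, next a ∈ F := by
    intro a ha
    have : tail a = tail e := by simpa [hF] using ha
    exact hmemF _ (by rw [hnext, this])
  exact Finset.inj_on_of_surj_on_of_card_le (fun a _ => next a)
    hmaps (fun b hb => hsurj b hb) le_rfl (hmemF x hx) (hmemF y hy) h

lemma iter_cancel (hnext : ∀ e, tail (next e) = tail e)
    (hcyc : ∀ e e' : E, tail e = tail e' → ∃ k, next^[k] e = e') (e : E) (i : ℕ) (x y : E) (hx : tail x = tail e) (hy : tail y = tail e)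
    (h : next^[i] x = next^[i] y) : x = y := by
  induction i with
  | zero => exact h
  | succ i ih =>
    apply ih
    rw [Function.iterate_succ_apply', Function.iterate_succ_apply'] at h
    exact next_inj tail next hnext hcyc e _ _
      (by rw [iter_tail tail next hnext, hx])
      (by rw [iter_tail tail next hnext, hy]) h

/-- The rotor at a vertex has exact period equal to the out-degree. -/
lemma period_prop (hnext : ∀ e, tail (next e) = tail e)
    (hcyc : ∀ e e' : E, tail e = tail e' → ∃ k, next^[k] e = e') (e : E) :
    next^[outdeg tail (tail e)] e = e ∧
    ∀ r, 0 < r → r < outdeg tail (tail e) → next^[r] e ≠ e := by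
  classical
  set F : Finset E := Finset.univ.filter (fun f => tail f = tail e) with hF
  have hdF : outdeg tail (tail e) = F.card := rfl
  have hmemF : ∀ k, next^[k] e ∈ F := fun k => by
    simp [hF, iter_tail tail next hnext]
  -- there is a positive period
  have hexists : ∃ p, 0 < p ∧ next^[p] e = e := by
    obtain ⟨i, j, hij, heq⟩ := Finite.exists_ne_map_eq_of_infinite (fun k : ℕ => next^[k] e)
    rcases Nat.lt_or_ge i j with hlt | hge
    · refine ⟨j - i, by omega, ?_⟩
      apply iter_cancel tail next hnext hcyc e i _ _ (iter_tail tail next hnext e _) rfl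
      rw [← Function.iterate_add_apply]
      rw [show i + (j - i) = j by omega]
      exact heq.symm
    · have hlt : j < i := by omega
      refine ⟨i - j, by omega, ?_⟩
      apply iter_cancel tail next hnext hcyc e j _ _ (iter_tail tail next hnext e _) rfl
      rw [← Function.iterate_add_apply]
      rw [show j + (i - j) = i by omega]
      exact heq
  set p : ℕ := Nat.find hexists with hp
  obtain ⟨hppos, hpe⟩ : 0 < p ∧ next^[p] e = e := Nat.find_spec hexists
  have hpmin : ∀ r, 0 < r → r < p → next^[r] e ≠ e := by
    intro r hr hrp hre
    exact Nat.find_min hexists hrp ⟨hr, hre⟩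
  have hmul : ∀ q, next^[p * q] e = e := by
    intro q
    induction q with
    | zero => rfl
    | succ q ih =>
      rw [Nat.mul_succ, Function.iterate_add_apply, hpe, ih]
  have hmod : ∀ k, next^[k] e = next^[k % p] e := by
    intro k
    conv_lhs => rw [show k = k % p + p * (k / p) from (Nat.mod_add_div k p).symm]
    rw [Function.iterate_add_apply, hmul]
  -- p ≤ F.card : the iterates up to p are distinct and lie in F
  have hinj : Set.InjOn (fun k => next^[k] e) (Finset.range p) := by
    intro a ha b hb hab
    simp only [Finset.coe_range, Set.mem_Iio] at ha hb
    by_contra hne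
    rcases Nat.lt_or_ge a b with hlt | hge
    · have : next^[b - a] e = e := by
        apply iter_cancel tail next hnext hcyc e a _ _ (iter_tail tail next hnext e _) rfl
        rw [← Function.iterate_add_apply, show a + (b - a) = b by omega]
        exact hab.symm
      exact hpmin (b - a) (by omega) (by omega) this
    · have hlt : b < a := by omega
      have : next^[a - b] e = e := by
        apply iter_cancel tail next hnext hcyc e b _ _ (iter_tail tail next hnext e _) rfl
        rw [← Function.iterate_add_apply, show b + (a - b) = a by omega]
        exact hab
      exact hpmin (a - b) (by omega) (by omega) this
  have hple : p ≤ F.card := by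
    have := Finset.card_le_card_of_injOn (fun k => next^[k] e)
      (fun k _ => hmemF k) hinj
    simpa using this
  have hlep : F.card ≤ p := by
    have hsurj : Set.SurjOn (fun k => next^[k] e) (Finset.range p) (F : Set E) := by
      intro f hf
      have hfe : tail f = tail e := by simpa [hF] using hf
      obtain ⟨k, hk⟩ := hcyc e f hfe.symm
      refine ⟨k % p, ?_, ?_⟩
      · simp [Nat.mod_lt _ hppos]
      · show next^[k % p] e = f
        rw [← hmod]; exact hk
    have := Finset.card_le_card_of_surjOn (fun k => next^[k] e) hsurj
    simpa using this
  have hpd : p = outdeg tail (tail e) := by rw [hdF]; omega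
  exact ⟨by rw [← hpd]; exact hpe, by rw [← hpd]; exact hpmin⟩

lemma iter_dvd_sub (hnext : ∀ e, tail (next e) = tail e)
    (hcyc : ∀ e e' : E, tail e = tail e' → ∃ k, next^[k] e = e') (e : E) (a b : ℕ) (hab : a ≤ b) (h : next^[a] e = next^[b] e) :
    outdeg tail (tail e) ∣ b - a := by
  obtain ⟨hpe, hpmin⟩ := period_prop tail next hnext hcyc e
  set d := outdeg tail (tail e) with hd
  have hdpos : 0 < d := by
    by_contra hc
    have hd0 : d = 0 := by omega
    have := hpe
    rw [hd0] at this
    -- next^[0] e = e always; need contradiction differently: d = 0 impossible since e in fiber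
    have hmem : e ∈ Finset.univ.filter (fun f => tail f = tail e) := by simp
    have : 0 < outdeg tail (tail e) := Finset.card_pos.mpr ⟨e, hmem⟩
    omega
  have hme : next^[b - a] e = e := by
    apply iter_cancel tail next hnext hcyc e a _ _ (iter_tail tail next hnext e _) rfl
    rw [← Function.iterate_add_apply, show a + (b - a) = b by omega]
    exact h.symm
  have hmul : ∀ q, next^[d * q] e = e := by
    intro q
    induction q with
    | zero => rfl
    | succ q ih => rw [Nat.mul_succ, Function.iterate_add_apply, hpe, ih]
  have hmod : next^[(b - a) % d] e = e := by
    have : next^[(b-a) % d + d * ((b-a) / d)] e = e := by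
      rw [show (b-a) % d + d * ((b-a)/d) = b - a from Nat.mod_add_div (b-a) d]
      exact hme
    rw [Function.iterate_add_apply, hmul] at this
    exact this
  rcases Nat.eq_zero_or_pos ((b - a) % d) with h0 | hpos
  · omega
  · exact absurd hmod (hpmin _ hpos (Nat.mod_lt _ hdpos))

end Period
section Window

set_option linter.unusedSectionVars false

variable {V E : Type} [Fintype V] [DecidableEq V] [Fintype E]
variable (tail head : E → V) (next : E → E)

lemma outdeg_pos (e : E) : 0 < outdeg tail (tail e) :=
  Finset.card_pos.mpr ⟨e, by simp⟩

lemma iter_mod (hnext : ∀ e, tail (next e) = tail e)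
    (hcyc : ∀ e e' : E, tail e = tail e' → ∃ k, next^[k] e = e') (e : E) (k : ℕ) :
    next^[k] e = next^[k % outdeg tail (tail e)] e := by
  obtain ⟨hpe, -⟩ := period_prop tail next hnext hcyc e
  set d := outdeg tail (tail e) with hd
  have hmul : ∀ q, next^[d * q] e = e := by
    intro q
    induction q with
    | zero => rfl
    | succ q ih => rw [Nat.mul_succ, Function.iterate_add_apply, hpe, ih]
  conv_lhs => rw [show k = k % d + d * (k / d) from (Nat.mod_add_div k d).symm]
  rw [Function.iterate_add_apply, hmul]

lemma slide_sum (g : ℕ → ℕ) (d : ℕ) (hgp : ∀ j, g (j + d) = g j) :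
    ∀ k, ∑ j ∈ Finset.range d, g (k + j) = ∑ j ∈ Finset.range d, g j := by
  intro k
  induction k with
  | zero => simp
  | succ k ih =>
    have h1 := Finset.sum_range_succ (fun j => g (k + j)) d
    have h2 := Finset.sum_range_succ' (fun j => g (k + j)) d
    have h3 : ∑ j ∈ Finset.range d, g (k + (j+1)) = ∑ j ∈ Finset.range d, g ((k+1) + j) :=
      Finset.sum_congr rfl fun j _ => by rw [show k + (j+1) = (k+1) + j by omega]
    simp only [Nat.add_zero] at h1 h2
    rw [h3] at h2
    have h4 : g (k + d) = g k := hgp k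
    omega

lemma sum_window (hnext : ∀ e, tail (next e) = tail e)
    (hcyc : ∀ e e' : E, tail e = tail e' → ∃ k, next^[k] e = e') (e : E) (x : V) :
    ∀ k : ℕ, ∑ j ∈ Finset.range (outdeg tail (tail e)),
        (if head (next^[k + j] e) = x then 1 else 0)
      = ∑ j ∈ Finset.range (outdeg tail (tail e)),
        (if head (next^[j] e) = x then (1:ℕ) else 0) := by
  obtain ⟨hpe, -⟩ := period_prop tail next hnext hcyc e
  intro k
  refine slide_sum (fun j => if head (next^[j] e) = x then 1 else 0) _ ?_ k
  intro j
  rw [Function.iterate_add_apply, hpe]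

lemma sum_fiber (hnext : ∀ e, tail (next e) = tail e)
    (hcyc : ∀ e e' : E, tail e = tail e' → ∃ k, next^[k] e = e') (e : E) (x : V) :
    ∑ j ∈ Finset.range (outdeg tail (tail e)), (if head (next^[j] e) = x then (1:ℕ) else 0)
      = numEdges tail head (tail e) x := by
  classical
  set d := outdeg tail (tail e) with hd
  have hdpos : 0 < d := outdeg_pos tail e
  set F : Finset E := Finset.univ.filter (fun f => tail f = tail e) with hF
  have hbij : ∑ j ∈ Finset.range d, (if head (next^[j] e) = x then (1:ℕ) else 0)
      = ∑ f ∈ F, (if head f = x then (1:ℕ) else 0) := by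
    refine Finset.sum_bij (fun j _ => next^[j] e) ?_ ?_ ?_ ?_
    · intro j _
      simp [hF, iter_tail tail next hnext]
    · intro j₁ hj₁ j₂ hj₂ hj
      simp only [Finset.mem_range] at hj₁ hj₂
      rcases le_total j₁ j₂ with hle | hle
      · have := iter_dvd_sub tail next hnext hcyc e j₁ j₂ hle hj
        have := Nat.eq_zero_of_dvd_of_lt this (show j₂ - j₁ < _ by omega)
        omega
      · have := iter_dvd_sub tail next hnext hcyc e j₂ j₁ hle hj.symm
        have := Nat.eq_zero_of_dvd_of_lt this (show j₁ - j₂ < _ by omega)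
        omega
    · intro f hf
      have hfe : tail f = tail e := by simpa [hF] using hf
      obtain ⟨k, hk⟩ := hcyc e f hfe.symm
      refine ⟨k % d, Finset.mem_range.mpr (Nat.mod_lt _ hdpos), ?_⟩
      show next^[k % d] e = f
      rw [← iter_mod tail next hnext hcyc e k]
      exact hk
    · intro j _
      rfl
  rw [hbij]
  rw [← Finset.card_filter]
  rw [hF, Finset.filter_filter]
  rfl

lemma Nfun_window (hnext : ∀ e, tail (next e) = tail e)
    (hcyc : ∀ e e' : E, tail e = tail e' → ∃ k, next^[k] e = e') (e : E) (x : V) (k : ℕ) :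
    Nfun head next e x (k + outdeg tail (tail e))
      = Nfun head next e x k + numEdges tail head (tail e) x := by
  set d := outdeg tail (tail e) with hd
  unfold Nfun
  rw [Finset.sum_range_add]
  congr 1
  have h1 : ∑ j ∈ Finset.range d, (if head (next^[k + j + 1] e) = x then (1:ℕ) else 0)
      = ∑ j ∈ Finset.range d, (if head (next^[(k+1) + j] e) = x then (1:ℕ) else 0) :=
    Finset.sum_congr rfl fun j _ => by rw [show k + j + 1 = (k+1) + j by omega]
  rw [h1, sum_window tail head next hnext hcyc e x (k+1), sum_fiber tail head next hnext hcyc e x]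

lemma Nfun_add_mul (hnext : ∀ e, tail (next e) = tail e)
    (hcyc : ∀ e e' : E, tail e = tail e' → ∃ k, next^[k] e = e') (e : E) (x : V) (k q : ℕ) :
    Nfun head next e x (k + q * outdeg tail (tail e))
      = Nfun head next e x k + q * numEdges tail head (tail e) x := by
  induction q with
  | zero => simp
  | succ q ih =>
    rw [show k + (q+1) * outdeg tail (tail e)
        = (k + q * outdeg tail (tail e)) + outdeg tail (tail e) by ring]
    rw [Nfun_window tail head next hnext hcyc e x _, ih]
    ring

lemma Nfun_int_diff (hnext : ∀ e, tail (next e) = tail e)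
    (hcyc : ∀ e e' : E, tail e = tail e' → ∃ k, next^[k] e = e') (e : E) (x : V) (a b : ℕ)
    (h : next^[a] e = next^[b] e) :
    ((a:ℤ) - b) = (((a:ℤ)-b)/(outdeg tail (tail e))) * (outdeg tail (tail e))
    ∧ (Nfun head next e x a : ℤ) - Nfun head next e x b
        = (((a:ℤ)-b)/(outdeg tail (tail e))) * (numEdges tail head (tail e) x) := by
  set d := outdeg tail (tail e) with hd
  have hdpos : 0 < d := outdeg_pos tail e
  have hd0 : (d : ℤ) ≠ 0 := by exact_mod_cast hdpos.ne'
  rcases le_total b a with hle | hle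
  · have hdvd : d ∣ a - b := iter_dvd_sub tail next hnext hcyc e b a hle h.symm
    set q := (a - b) / d with hq
    have hqd : q * d = a - b := by rw [mul_comm]; exact Nat.mul_div_cancel' hdvd
    have hab : a = b + q * d := by omega
    have hN : Nfun head next e x a = Nfun head next e x b + q * numEdges tail head (tail e) x := by
      rw [hab]; exact Nfun_add_mul tail head next hnext hcyc e x b q
    have hz : (a:ℤ) - b = (q:ℤ) * d := by
      rw [hab]; push_cast; ring
    have hdiv : ((a:ℤ)-b)/d = q := by
      rw [hz, Int.mul_ediv_cancel _ hd0]
    refine ⟨by rw [hdiv, ← hz], ?_⟩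
    rw [hdiv, hN]
    push_cast
    ring
  · have hdvd : d ∣ b - a := iter_dvd_sub tail next hnext hcyc e a b hle h
    set q := (b - a) / d with hq
    have hqd : q * d = b - a := by rw [mul_comm]; exact Nat.mul_div_cancel' hdvd
    have hab : b = a + q * d := by omega
    have hN : Nfun head next e x b = Nfun head next e x a + q * numEdges tail head (tail e) x := by
      rw [hab]; exact Nfun_add_mul tail head next hnext hcyc e x a q
    have hz : (a:ℤ) - b = (-(q:ℤ)) * d := by
      rw [hab]; push_cast; ring
    have hdiv : ((a:ℤ)-b)/d = -(q:ℤ) := by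
      rw [hz, Int.mul_ediv_cancel _ hd0]
    refine ⟨by rw [hdiv, ← hz], ?_⟩
    rw [hdiv, hN]
    push_cast
    ring

end Window

/-- **Freeness of the sandpile action.**  Let `G` be a digraph with a global sink and
let `σ₁`, `σ₂` be recurrent chip configurations.  If there is an acyclic rotor
configuration `ρ` such that `σ₁(ρ) = σ₂(ρ)`, then `σ₁ = σ₂`. -/
theorem sandpile_action_free
    {V E : Type} [Fintype V] [DecidableEq V] [Fintype E]
    (tail head : E → V) (next : E → E)
    (hnext : ∀ e, tail (next e) = tail e)
    (hcyc : ∀ e e' : E, tail e = tail e' → ∃ k, next^[k] e = e')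
    (s : V) (hs : outdeg tail s = 0)
    (hglobal : ∀ v : V,
      Relation.ReflTransGen (fun a b => ∃ e, tail e = a ∧ head e = b) v s)
    (σ₁ σ₂ : Vne s → ℕ)
    (hσ₁ : Recurrent tail head σ₁) (hσ₂ : Recurrent tail head σ₂)
    (ρ : RotorConfig tail s) (hρ : RAcyclic tail head s ρ)
    (τ : RotorConfig tail s)
    (h₁ : RoutesAll tail head next hnext σ₁ ρ τ)
    (h₂ : RoutesAll tail head next hnext σ₂ ρ τ) :
    σ₁ = σ₂ := by
  classical
  obtain ⟨l₁, hleg₁, hzero₁, hrot₁⟩ := h₁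
  obtain ⟨l₂, hleg₂, hzero₂, hrot₂⟩ := h₂
  have hrotv : ∀ v : Vne s, next^[l₁.count v] (ρ.1 v) = next^[l₂.count v] (ρ.1 v) := by
    intro v
    have e₁ := crFireList_rotor tail head next hnext l₁ (σ₁, ρ) v
    have e₂ := crFireList_rotor tail head next hnext l₂ (σ₂, ρ) v
    have c₁ := congrArg (fun r : RotorConfig tail s => r.1 v) hrot₁
    have c₂ := congrArg (fun r : RotorConfig tail s => r.1 v) hrot₂
    rw [e₁] at c₁
    rw [e₂] at c₂
    exact c₁.trans c₂.symm
  have hchip₁ : ∀ v : Vne s, (l₁.count v : ℤ)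
      = (σ₁ v : ℤ) + ∑ w : Vne s, (Nfun head next (ρ.1 w) v.1 (l₁.count w) : ℤ) := by
    intro v
    have := crFireList_chips tail head next hnext l₁ (σ₁, ρ) hleg₁ v
    rw [hzero₁ v] at this
    simpa using this
  have hchip₂ : ∀ v : Vne s, (l₂.count v : ℤ)
      = (σ₂ v : ℤ) + ∑ w : Vne s, (Nfun head next (ρ.1 w) v.1 (l₂.count w) : ℤ) := by
    intro v
    have := crFireList_chips tail head next hnext l₂ (σ₂, ρ) hleg₂ v
    rw [hzero₂ v] at this
    simpa using this
  refine recurrent_unique tail head σ₁ σ₂ hσ₁ hσ₂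
    (fun v => ((l₁.count v : ℤ) - (l₂.count v : ℤ)) / ((outdeg tail v.1 : ℕ) : ℤ)) ?_
  intro v
  have hsum : ∑ w : Vne s,
      (((l₁.count w : ℤ) - (l₂.count w : ℤ)) / ((outdeg tail w.1 : ℕ) : ℤ))
        * (numEdges tail head w.1 v.1 : ℤ)
      = (∑ w : Vne s, (Nfun head next (ρ.1 w) v.1 (l₁.count w) : ℤ))
        - ∑ w : Vne s, (Nfun head next (ρ.1 w) v.1 (l₂.count w) : ℤ) := by
    rw [← Finset.sum_sub_distrib]
    refine Finset.sum_congr rfl fun w _ => ?_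
    have h2 := (Nfun_int_diff tail head next hnext hcyc (ρ.1 w) v.1
      (l₁.count w) (l₂.count w) (hrotv w)).2
    rw [ρ.2 w] at h2
    exact h2.symm
  have hcv := (Nfun_int_diff tail head next hnext hcyc (ρ.1 v) v.1
      (l₁.count v) (l₂.count v) (hrotv v)).1
  rw [ρ.2 v] at hcv
  rw [hsum]
  have h1 := hchip₁ v
  have h2 := hchip₂ v
  linarith [hcv, h1, h2]
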